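/- In type A_n with n+1 = (m+1)l, let σ ∈ S_{n+1} be the permutation σ = (1,2,…,l)(l+1,…,2l)⋯(ml+1,…,(m+1)l) and let w be as above. Then for 0 ≤ t ≤ l−1 one has w·0 = wσ^t·0 + l ϖ_{g(t)}, where g(t) = t(m+1) and ϖ_{g(0)} := 0, and moreover ℓ(wσ^t) = ℓ(w) + (m+1)t(l−t). -/

import Mathlib

private lemma lexlt {M x y u v : ℕ} (hy : y < M) (hv : v < M) :
    x * M + y < u * M + v ↔ x < u ∨ (x = u ∧ y < v) := by
  constructor
  · intro h
    rcases lt_trichotomy x u with h' | h' | h'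
    · exact Or.inl h'
    · exact Or.inr ⟨h', by subst h'; omega⟩
    · exfalso
      have h2 : (u + 1) * M ≤ x * M := Nat.mul_le_mul_right M (Nat.succ_le.mpr h')
      rw [Nat.succ_mul] at h2; omega
  · rintro (h | ⟨rfl, h2⟩)
    · have h2 : (x + 1) * M ≤ u * M := Nat.mul_le_mul_right M (Nat.succ_le.mpr h)
      rw [Nat.succ_mul] at h2; omega
    · omega

private lemma sum_lt_card (l K : ℕ) (hK : K ≤ l) :
    (∑ a : Fin l, if (a : ℕ) < K then (1:ℕ) else 0) = K := by
  rw [Fin.sum_univ_eq_sum_range (fun i => if i < K then (1:ℕ) else 0) l,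
    ← Finset.card_filter]
  have h : (Finset.range l).filter (fun i => i < K) = Finset.range K := by
    ext i; simp only [Finset.mem_filter, Finset.mem_range]; omega
  rw [h, Finset.card_range]

private lemma sum_ge_card (l K : ℕ) (hK : K ≤ l) :
    (∑ a : Fin l, if K ≤ (a : ℕ) then (1:ℕ) else 0) = l - K := by
  rw [Fin.sum_univ_eq_sum_range (fun i => if K ≤ i then (1:ℕ) else 0) l,
    ← Finset.card_filter]
  have h : (Finset.range l).filter (fun i => K ≤ i) = Finset.range l \ Finset.range K := by
    ext i; simp only [Finset.mem_filter, Finset.mem_range, Finset.mem_sdiff]; omega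
  rw [h, Finset.card_sdiff_of_subset (Finset.range_subset_range.mpr hK), Finset.card_range,
    Finset.card_range]



/-- In type `A_n` with `n + 1 = (m+1)l`, let `σ ∈ S_{n+1}` be the product
of the `m+1` cycles of length `l` (0-based: `σ` advances each index cyclically within its
block of `l` consecutive indices), and let `w` be the permutation
`w(i) = (i % l)(m+1) + i/l`.  Realizing `ρ` in `ε`-coordinates (up to an irrelevant
constant) as `ρ_i = n − i` and the dot action by `u·0 = ρ∘u⁻¹ − ρ`, we have for
`0 ≤ t ≤ l − 1`:
`w·0 = (wσ^t)·0 + l ϖ_{t(m+1)}` (where `l ϖ_{t(m+1)}` is the vector with value `l − t` on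
the first `t(m+1)` coordinates and `−t` elsewhere, and `ϖ_0 = 0`), and moreover
`ℓ(wσ^t) = ℓ(w) + (m+1)t(l−t)`, with length computed as the number of inversions. -/
theorem stmt_8 (l m : ℕ) (hl : 1 < l)
    (w σ : Equiv.Perm (Fin (l * (m + 1))))
    (hw : ∀ i : Fin (l * (m + 1)), (w i : ℕ) = ((i : ℕ) % l) * (m + 1) + (i : ℕ) / l)
    (hσ : ∀ i : Fin (l * (m + 1)), (σ i : ℕ) = l * ((i : ℕ) / l) + (((i : ℕ) % l) + 1) % l)
    (ρ : Fin (l * (m + 1)) → ℤ)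
    (hρ : ∀ i, ρ i = (l * (m + 1) : ℤ) - 1 - (i : ℕ))
    (t : ℕ) (ht : t ≤ l - 1) :
    (∀ k : Fin (l * (m + 1)),
      ρ (w.symm k) - ρ k =
        (ρ ((w * σ ^ t).symm k) - ρ k) +
          (if (k : ℕ) < t * (m + 1) then (l : ℤ) - (t : ℤ) else -(t : ℤ))) ∧
    (Finset.univ.filter (fun p : Fin (l * (m + 1)) × Fin (l * (m + 1)) =>
        p.1 < p.2 ∧ (w * σ ^ t) p.2 < (w * σ ^ t) p.1)).card =
      (Finset.univ.filter (fun p : Fin (l * (m + 1)) × Fin (l * (m + 1)) =>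
        p.1 < p.2 ∧ w p.2 < w p.1)).card + (m + 1) * t * (l - t) := by
  have hl0 : 0 < l := by omega
  have htl : t < l := by omega
  have hws : ∀ (s : ℕ) (i : Fin (l * (m + 1))),
      ((w * σ ^ s) i : ℕ) = ((i : ℕ) % l + s) % l * (m + 1) + (i : ℕ) / l := by
    intro s
    induction s with
    | zero =>
      intro i
      simp only [pow_zero, mul_one, hw, Nat.add_zero]
      rw [Nat.mod_mod_of_dvd _ dvd_rfl]
    | succ s ih =>
      intro i
      have h1 : (w * σ ^ (s+1)) i = (w * σ ^ s) (σ i) := by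
        rw [pow_succ, ← mul_assoc]; rfl
      rw [h1, ih]
      have hr : (((i : ℕ) % l) + 1) % l < l := Nat.mod_lt _ hl0
      have hmod : ((σ i : ℕ)) % l = ((i : ℕ) % l + 1) % l := by
        rw [hσ, Nat.mul_add_mod, Nat.mod_eq_of_lt hr]
      have hdiv : ((σ i : ℕ)) / l = (i : ℕ) / l := by
        rw [hσ, Nat.mul_add_div hl0, Nat.div_eq_of_lt hr, Nat.add_zero]
      rw [hmod, hdiv, Nat.mod_add_mod]
      have h2 : (i : ℕ) % l + 1 + s = (i : ℕ) % l + (s + 1) := by omega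
      rw [h2]
  constructor
  · intro k
    obtain ⟨a, b, hal, hb1, hk⟩ : ∃ a b, a < l ∧ b < m + 1 ∧ (k : ℕ) = a * (m + 1) + b :=
      ⟨(k : ℕ) / (m + 1), (k : ℕ) % (m + 1),
        Nat.div_lt_of_lt_mul (by rw [Nat.mul_comm (m+1) l]; exact k.isLt),
        Nat.mod_lt _ (Nat.succ_pos m),
        by rw [Nat.mul_comm ((k:ℕ)/(m+1)) (m+1)]; exact (Nat.div_add_mod _ _).symm⟩
    have hsymm : ∀ s : ℕ, s < l → ((w * σ ^ s).symm k : ℕ) = (a + l - s) % l + l * b := by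
      intro s hs
      have hx : (a + l - s) % l < l := Nat.mod_lt _ hl0
      have hbd : (a + l - s) % l + l * b < l * (m + 1) := by
        have h1 : l * b ≤ l * m := Nat.mul_le_mul_left l (by omega)
        have h2 : l * (m + 1) = l * m + l := by ring
        omega
      have hjm : ((a + l - s) % l + l * b) % l = (a + l - s) % l := by
        rw [Nat.add_mul_mod_self_left, Nat.mod_mod_of_dvd _ dvd_rfl]
      have hjd : ((a + l - s) % l + l * b) / l = b := by
        rw [Nat.add_mul_div_left _ _ hl0, Nat.div_eq_of_lt hx, Nat.zero_add]
      have hwj : (w * σ ^ s) ⟨(a + l - s) % l + l * b, hbd⟩ = k := by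
        apply Fin.ext
        rw [hws]
        simp only [Fin.val_mk]
        rw [hjm, hjd, Nat.mod_add_mod, show a + l - s + s = a + l from by omega,
          Nat.add_mod_right, Nat.mod_eq_of_lt hal]
        exact hk.symm
      rw [show (w * σ ^ s).symm k = ⟨(a + l - s) % l + l * b, hbd⟩ from
        by rw [Equiv.symm_apply_eq]; exact hwj.symm]
    have h0 : (w.symm k : ℕ) = a + l * b := by
      have h := hsymm 0 hl0
      rw [pow_zero, mul_one] at h
      rw [h, Nat.sub_zero, Nat.add_mod_right, Nat.mod_eq_of_lt hal]
    have hT := hsymm t htl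
    have hkt : (k : ℕ) < t * (m + 1) ↔ a < t := by
      constructor
      · intro h; by_contra h'
        have h2 : t * (m+1) ≤ a * (m+1) := Nat.mul_le_mul_right _ (by omega)
        omega
      · intro h
        have h2 : (a + 1) * (m+1) ≤ t * (m+1) := Nat.mul_le_mul_right _ (by omega)
        rw [Nat.succ_mul] at h2
        omega
    rw [hρ (w.symm k), hρ ((w * σ ^ t).symm k), hρ k, h0, hT]
    rcases Nat.lt_or_ge a t with hat | hat
    · have hmt : (a + l - t) % l = a + l - t := Nat.mod_eq_of_lt (by omega)
      rw [if_pos (hkt.mpr hat), hmt]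
      push_cast
      omega
    · have hmt : (a + l - t) % l = a - t := by
        rw [show a + l - t = (a - t) + l from by omega, Nat.add_mod_right,
          Nat.mod_eq_of_lt (by omega)]
      rw [if_neg (by rw [hkt]; omega), hmt]
      push_cast
      omega
  · have key : ∀ s : ℕ, s < l →
        (Finset.univ.filter (fun p : Fin (l * (m + 1)) × Fin (l * (m + 1)) =>
            p.1 < p.2 ∧ (w * σ ^ s) p.2 < (w * σ ^ s) p.1)).card =
          ((Finset.univ.filter (fun q : Fin (m+1) × Fin (m+1) => q.1 < q.2)).card)
            * ((Finset.univ.filter (fun q : Fin l × Fin l => q.2 < q.1)).card)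
          + (m + 1) * (s * (l - s)) := by
      intro s hs
      -- the equivalence (a, b) ↦ a + l * b
      have hbd : ∀ p : Fin l × Fin (m + 1), (p.1 : ℕ) + l * (p.2 : ℕ) < l * (m + 1) := by
        intro p
        have h1 : l * (p.2 : ℕ) ≤ l * m := Nat.mul_le_mul_left l (by omega)
        have h2 : l * (m + 1) = l * m + l := by ring
        have := p.1.isLt
        omega
      let e : Fin l × Fin (m + 1) ≃ Fin (l * (m + 1)) :=
        { toFun := fun p => ⟨(p.1 : ℕ) + l * (p.2 : ℕ), hbd p⟩
          invFun := fun k => (⟨(k : ℕ) % l, Nat.mod_lt _ hl0⟩, ⟨(k : ℕ) / l, Nat.div_lt_of_lt_mul k.isLt⟩)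
          left_inv := by
            rintro ⟨x, y⟩
            have h1 : ((x : ℕ) + l * y) % l = (x : ℕ) := by
              rw [Nat.add_mul_mod_self_left, Nat.mod_eq_of_lt x.isLt]
            have h2 : ((x : ℕ) + l * y) / l = (y : ℕ) := by
              rw [Nat.add_mul_div_left _ _ hl0, Nat.div_eq_of_lt x.isLt, Nat.zero_add]
            simp only [Prod.mk.injEq]
            exact ⟨Fin.ext h1, Fin.ext h2⟩
          right_inv := by
            intro k
            apply Fin.ext
            exact Nat.mod_add_div _ _ }
      have hval : ∀ (x : Fin l) (y : Fin (m + 1)),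
          ((w * σ ^ s) (e (x, y)) : ℕ) = ((x : ℕ) + s) % l * (m + 1) + (y : ℕ) := by
        intro x y
        rw [show e (x, y) = ⟨(x : ℕ) + l * (y : ℕ), hbd (x, y)⟩ from rfl, hws]
        simp only [Fin.val_mk]
        rw [Nat.add_mul_mod_self_left, Nat.mod_eq_of_lt x.isLt,
          Nat.add_mul_div_left _ _ hl0, Nat.div_eq_of_lt x.isLt, Nat.zero_add]
      have hpt : ∀ (y : (Fin l × Fin (m + 1)) × (Fin l × Fin (m + 1))),
          (if ((e.prodCongr e) y).1 < ((e.prodCongr e) y).2 ∧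
              (w * σ ^ s) ((e.prodCongr e) y).2 < (w * σ ^ s) ((e.prodCongr e) y).1
            then (1 : ℕ) else 0)
          = (if ((y.1.2 : ℕ) < y.2.2 ∧ ((y.2.1 : ℕ) + s) % l < ((y.1.1 : ℕ) + s) % l)
              then (1 : ℕ) else 0)
          + (if ((y.1.2 : ℕ) = y.2.2 ∧ (y.1.1 : ℕ) < y.2.1 ∧
                ((y.2.1 : ℕ) + s) % l < ((y.1.1 : ℕ) + s) % l) then (1 : ℕ) else 0) := by
        rintro ⟨⟨a, b⟩, ⟨c, d⟩⟩
        simp only [Equiv.prodCongr_apply, Prod.map]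
        have e0 : ∀ (x : Fin l) (y : Fin (m + 1)), (e (x, y) : ℕ) = (x : ℕ) + l * (y : ℕ) := by
          intro x y; rfl
        have e1 : (e (a, b) < e (c, d)) ↔ ((b : ℕ) < d ∨ ((b : ℕ) = d ∧ (a : ℕ) < c)) := by
          rw [Fin.lt_def, e0, e0, Nat.add_comm (a : ℕ), Nat.add_comm (c : ℕ),
            Nat.mul_comm l (b : ℕ), Nat.mul_comm l (d : ℕ)]
          exact lexlt a.isLt c.isLt
        have e2 : ((w * σ ^ s) (e (c, d)) < (w * σ ^ s) (e (a, b))) ↔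
            (((c : ℕ) + s) % l < ((a : ℕ) + s) % l ∨
              (((c : ℕ) + s) % l = ((a : ℕ) + s) % l ∧ (d : ℕ) < b)) := by
          rw [Fin.lt_def, hval, hval]
          exact lexlt d.isLt b.isLt
        have hinj : ((c : ℕ) + s) % l = ((a : ℕ) + s) % l ↔ (c : ℕ) = (a : ℕ) := by
          constructor
          · intro h
            have h2 : (c : ℕ) % l = (a : ℕ) % l := Nat.ModEq.add_right_cancel' s h
            rwa [Nat.mod_eq_of_lt c.isLt, Nat.mod_eq_of_lt a.isLt] at h2
          · intro h; rw [h]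
        simp only [e1, e2]
        have hA : ((a : ℕ) + s) % l < l := Nat.mod_lt _ hl0
        have hC : ((c : ℕ) + s) % l < l := Nat.mod_lt _ hl0
        generalize ((a : ℕ) + s) % l = A at *
        generalize ((c : ℕ) + s) % l = C at *
        split_ifs <;> omega
      rw [Finset.card_filter, ← Equiv.sum_comp (e.prodCongr e)
        (fun p : Fin (l * (m + 1)) × Fin (l * (m + 1)) =>
          if p.1 < p.2 ∧ (w * σ ^ s) p.2 < (w * σ ^ s) p.1 then (1 : ℕ) else 0)]
      simp only [hpt, Finset.sum_add_distrib]
      set comm := Equiv.prodProdProdComm (Fin l) (Fin (m + 1)) (Fin l) (Fin (m + 1)) with hcomm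
      haveI : NeZero l := ⟨by omega⟩
      -- reindexing the l-part sums by the cyclic shift
      have hgE : (∑ u : Fin l × Fin l,
            if ((u.2 : ℕ) + s) % l < ((u.1 : ℕ) + s) % l then (1 : ℕ) else 0)
          = ∑ u : Fin l × Fin l, if (u.2 : ℕ) < (u.1 : ℕ) then (1 : ℕ) else 0 := by
        have hc := Equiv.sum_comp
          ((Equiv.addRight (⟨s, hs⟩ : Fin l)).prodCongr (Equiv.addRight (⟨s, hs⟩ : Fin l)))
          (fun u : Fin l × Fin l => if (u.2 : ℕ) < (u.1 : ℕ) then (1 : ℕ) else 0)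
        rw [← hc]
        apply Finset.sum_congr rfl
        rintro ⟨x, y⟩ -
        simp only [Equiv.prodCongr_apply, Prod.map, Equiv.coe_addRight, Fin.add_def]
      -- first sum
      have hS1 : (∑ y : (Fin l × Fin (m + 1)) × (Fin l × Fin (m + 1)),
            if ((y.1.2 : ℕ) < y.2.2 ∧ ((y.2.1 : ℕ) + s) % l < ((y.1.1 : ℕ) + s) % l)
              then (1 : ℕ) else 0)
          = (∑ u : Fin l × Fin l, if (u.2 : ℕ) < (u.1 : ℕ) then (1 : ℕ) else 0)
            * (∑ v : Fin (m + 1) × Fin (m + 1), if (v.1 : ℕ) < (v.2 : ℕ) then (1 : ℕ) else 0) := by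
        have h1 : ∀ y : (Fin l × Fin (m + 1)) × (Fin l × Fin (m + 1)),
            (if ((y.1.2 : ℕ) < y.2.2 ∧ ((y.2.1 : ℕ) + s) % l < ((y.1.1 : ℕ) + s) % l)
              then (1 : ℕ) else 0)
            = (fun z : (Fin l × Fin l) × (Fin (m + 1) × Fin (m + 1)) =>
                (if ((z.1.2 : ℕ) + s) % l < ((z.1.1 : ℕ) + s) % l then (1 : ℕ) else 0)
                * (if (z.2.1 : ℕ) < (z.2.2 : ℕ) then (1 : ℕ) else 0)) (comm y) := by
          rintro ⟨⟨a, b⟩, ⟨c, d⟩⟩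
          simp only [hcomm, Equiv.prodProdProdComm_apply]
          by_cases h1 : ((c : ℕ) + s) % l < ((a : ℕ) + s) % l <;>
            by_cases h2 : (b : ℕ) < (d : ℕ) <;> simp [h1, h2]
        rw [Finset.sum_congr rfl (fun y _ => h1 y),
          Equiv.sum_comp comm (fun z : (Fin l × Fin l) × (Fin (m + 1) × Fin (m + 1)) =>
            (if ((z.1.2 : ℕ) + s) % l < ((z.1.1 : ℕ) + s) % l then (1 : ℕ) else 0)
              * (if (z.2.1 : ℕ) < (z.2.2 : ℕ) then (1 : ℕ) else 0)),
          Fintype.sum_prod_type]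
        dsimp only
        rw [← hgE, Finset.sum_mul_sum]
      -- second sum
      have hS2 : (∑ y : (Fin l × Fin (m + 1)) × (Fin l × Fin (m + 1)),
            if ((y.1.2 : ℕ) = y.2.2 ∧ (y.1.1 : ℕ) < y.2.1 ∧
                ((y.2.1 : ℕ) + s) % l < ((y.1.1 : ℕ) + s) % l) then (1 : ℕ) else 0)
          = ((l - s) * s) * (m + 1) := by
        have h1 : ∀ y : (Fin l × Fin (m + 1)) × (Fin l × Fin (m + 1)),
            (if ((y.1.2 : ℕ) = y.2.2 ∧ (y.1.1 : ℕ) < y.2.1 ∧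
                ((y.2.1 : ℕ) + s) % l < ((y.1.1 : ℕ) + s) % l) then (1 : ℕ) else 0)
            = (fun z : (Fin l × Fin l) × (Fin (m + 1) × Fin (m + 1)) =>
                (if ((z.1.1 : ℕ) < z.1.2 ∧ ((z.1.2 : ℕ) + s) % l < ((z.1.1 : ℕ) + s) % l)
                  then (1 : ℕ) else 0)
                * (if (z.2.1 : ℕ) = (z.2.2 : ℕ) then (1 : ℕ) else 0)) (comm y) := by
          rintro ⟨⟨a, b⟩, ⟨c, d⟩⟩
          simp only [hcomm, Equiv.prodProdProdComm_apply]
          by_cases h1 : ((a : ℕ) < c ∧ ((c : ℕ) + s) % l < ((a : ℕ) + s) % l) <;>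
            by_cases h2 : (b : ℕ) = (d : ℕ) <;> simp [h1, h2]
        rw [Finset.sum_congr rfl (fun y _ => h1 y),
          Equiv.sum_comp comm (fun z : (Fin l × Fin l) × (Fin (m + 1) × Fin (m + 1)) =>
            (if ((z.1.1 : ℕ) < z.1.2 ∧ ((z.1.2 : ℕ) + s) % l < ((z.1.1 : ℕ) + s) % l)
              then (1 : ℕ) else 0)
              * (if (z.2.1 : ℕ) = (z.2.2 : ℕ) then (1 : ℕ) else 0)),
          Fintype.sum_prod_type]
        dsimp only
        refine (Finset.sum_mul_sum (R := ℕ) Finset.univ Finset.univ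
          (fun x : Fin l × Fin l => if ((x.1 : ℕ) < x.2 ∧ ((x.2 : ℕ) + s) % l < ((x.1 : ℕ) + s) % l)
            then (1 : ℕ) else 0)
          (fun y : Fin (m + 1) × Fin (m + 1) => if (y.1 : ℕ) = (y.2 : ℕ) then (1 : ℕ) else 0)).symm.trans ?_
        -- the (m+1)-factor
        have h2 : (∑ v : Fin (m + 1) × Fin (m + 1),
            if (v.1 : ℕ) = (v.2 : ℕ) then (1 : ℕ) else 0) = m + 1 := by
          simp only [Fin.val_inj, Fintype.sum_prod_type]
          simp [Finset.sum_ite_eq]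
        -- the l-factor
        have hps : ∀ x y : Fin l, ((x : ℕ) < y ∧ ((y : ℕ) + s) % l < ((x : ℕ) + s) % l) ↔
            ((x : ℕ) < l - s ∧ l - s ≤ (y : ℕ)) := by
          intro x y
          have hx := x.isLt; have hy := y.isLt
          have mx : ((x : ℕ) + s) % l = if (x : ℕ) + s < l then (x : ℕ) + s else (x : ℕ) + s - l := by
            split_ifs with h
            · exact Nat.mod_eq_of_lt h
            · rw [show (x : ℕ) + s = ((x : ℕ) + s - l) + l from by omega, Nat.add_mod_right,
                Nat.mod_eq_of_lt (by omega)]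
              omega
          have my : ((y : ℕ) + s) % l = if (y : ℕ) + s < l then (y : ℕ) + s else (y : ℕ) + s - l := by
            split_ifs with h
            · exact Nat.mod_eq_of_lt h
            · rw [show (y : ℕ) + s = ((y : ℕ) + s - l) + l from by omega, Nat.add_mod_right,
                Nat.mod_eq_of_lt (by omega)]
              omega
          rw [mx, my]
          split_ifs <;> omega
        have h3 : (∑ u : Fin l × Fin l,
            if ((u.1 : ℕ) < u.2 ∧ ((u.2 : ℕ) + s) % l < ((u.1 : ℕ) + s) % l)
              then (1 : ℕ) else 0) = (l - s) * s := by
          have h4 : ∀ u : Fin l × Fin l,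
              (if ((u.1 : ℕ) < u.2 ∧ ((u.2 : ℕ) + s) % l < ((u.1 : ℕ) + s) % l)
                then (1 : ℕ) else 0)
              = (if (u.1 : ℕ) < l - s then (1 : ℕ) else 0)
                * (if l - s ≤ (u.2 : ℕ) then (1 : ℕ) else 0) := by
            intro u
            rw [if_congr (hps u.1 u.2) rfl rfl]
            by_cases h5 : (u.1 : ℕ) < l - s <;> by_cases h6 : l - s ≤ (u.2 : ℕ) <;>
              simp [h5, h6]
          rw [Finset.sum_congr rfl (fun u _ => h4 u), Fintype.sum_prod_type]
          dsimp only
          refine (Finset.sum_mul_sum (R := ℕ) Finset.univ Finset.univ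
            (fun x : Fin l => if (x : ℕ) < l - s then (1 : ℕ) else 0)
            (fun y : Fin l => if l - s ≤ (y : ℕ) then (1 : ℕ) else 0)).symm.trans ?_
          rw [sum_lt_card l (l - s) (by omega),
            sum_ge_card l (l - s) (by omega), Nat.sub_sub_self (by omega : s ≤ l)]
        rw [h2, h3]
      rw [hS1, hS2, Finset.card_filter, Finset.card_filter]
      simp only [Fin.lt_def]
      ring
    have h0 := key 0 hl0
    have hT := key t htl
    rw [pow_zero, mul_one] at h0
    rw [hT, h0]
    ring
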